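/- Let a > 0 and c < 0 be coprime integers with a ≠ 1, a < −c and with −ac not a perfect square, let n = 1 or n = −1, and set Q = n·!![2a, 0; 0, 2c]. Let (S,V) be the minimal positive solution of the Pell equation x² + ac·y² = 1. Then there exists an automorph M of Q with det M = −1 inducing ε·id on the discriminant group (i.e. (M − εI)·Q⁻¹ has integer entries) for some ε ∈ {1, −1} if and only if V is even and there is ε ∈ {1, −1} with S ≡ ε (mod 2a) and S ≡ −ε (mod 2c); in that case the automorph a'·u induces ε·id, where a' = !![1, 0; 0, −1] and u is the automorph corresponding to (S,V). -/

import Mathlib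

open Matrix


private lemma descent_step (a c S V p w : ℤ) (ha : 0 < a) (hc : c < 0)
    (hS : 0 < S) (hV : 0 < V) (hSV : S^2 + a*c*V^2 = 1)
    (hp : 0 < p) (hw : 0 < w) (hsol : p^2 + a*c*w^2 = 1) (hSp : S < p) :
    0 < p*S + a*c*w*V ∧ p*S + a*c*w*V < p ∧ 0 < w*S - p*V ∧
      (p*S + a*c*w*V)^2 + a*c*(w*S - p*V)^2 = 1 := by
  have hac : a*c < 0 := mul_neg_of_pos_of_neg ha hc
  have hwV : V < w := by
    by_contra h
    push_neg at h
    nlinarith [mul_pos (sub_pos.2 hSp) (by linarith : (0:ℤ) < p + S),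
      mul_nonneg (by linarith : (0:ℤ) ≤ -(a*c))
        (mul_nonneg (by linarith : (0:ℤ) ≤ V - w) (by linarith : (0:ℤ) ≤ V + w))]
  have hS2 : 2 ≤ S := by
    rcases lt_or_ge S 2 with h | h
    · interval_cases S
      · nlinarith [mul_pos hV hV]
    · exact h
  have h2 : 0 < p*S - a*c*w*V := by nlinarith [mul_pos hp hS, mul_pos hw hV]
  have h3 : 0 < (p*S + a*c*w*V)*(p*S - a*c*w*V) := by nlinarith [mul_pos hw hw, mul_pos hV hV]
  have h4 : 0 < p*S + a*c*w*V := by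
    rcases mul_pos_iff.mp h3 with ⟨h5, _⟩ | ⟨_, h6⟩
    · exact h5
    · linarith
  have hw1 : 0 < w*S - p*V := by
    have hsq : 0 < (w*S - p*V)*(w*S + p*V) := by
      nlinarith [mul_pos (sub_pos.2 hwV) (by linarith : (0:ℤ) < w + V)]
    rcases mul_pos_iff.mp hsq with ⟨h5, _⟩ | ⟨_, h6⟩
    · exact h5
    · nlinarith [mul_pos hw hS, mul_pos hp hV]
  refine ⟨h4, ?_, hw1, by linear_combination (p^2 + a*c*w^2) * hSV + hsol⟩
  have hsq : (p*(S-1))^2 < (a*c*w*V)^2 := by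
    nlinarith [mul_pos hp hp, mul_pos (sub_pos.2 hSp) (by linarith : (0:ℤ) < p + S),
      sq_nonneg (S-1), mul_pos hw hw]
  nlinarith [mul_nonneg hp.le (by linarith : (0:ℤ) ≤ S - 1), hsq]

private lemma sq_eq_of_sol (a c S V p w : ℤ) (hac : a*c < 0) (hV : 0 < V) (hw : 0 < w)
    (hSV : S^2 + a*c*V^2 = 1) (hsol : p^2 + a*c*w^2 = 1) (hpS : p = S) : w = V := by
  subst hpS
  have h : a*c*((w - V)*(w + V)) = 0 := by linear_combination hsol - hSV
  have h2 : (w - V)*(w + V) = 0 := by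
    rcases mul_eq_zero.mp h with h' | h'
    · exact absurd h' (ne_of_lt hac)
    · exact h'
  rcases mul_eq_zero.mp h2 with h' | h'
  · linarith
  · linarith

private lemma key_induction (a c S V : ℤ) (ha : 0 < a) (ha1 : a ≠ 1) (hc : c < 0)
    (haltc : a < -c) (hS : 0 < S) (hV : 0 < V) (hSV : S^2 + a*c*V^2 = 1)
    (hmin : ∀ s v : ℤ, 0 < s → 0 < v → s ^ 2 + a * c * v ^ 2 = 1 → S ≤ s)
    (ε : ℤ) (hε : ε = 1 ∨ ε = -1) :
    ∀ N : ℕ, ∀ p w : ℤ, p ≤ N → 0 < p → 0 < w → p^2 + a*c*w^2 = 1 → 2 ∣ w →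
      2*a ∣ p - ε → 2*c ∣ p + ε →
      2 ∣ V ∧ 2*a ∣ S - ε ∧ 2*c ∣ S + ε := by
  have hac : a*c < 0 := mul_neg_of_pos_of_neg ha hc
  have haS2 : a ∣ S^2 - 1 := ⟨-(c*V^2), by linear_combination hSV⟩
  have hcS2 : c ∣ S^2 - 1 := ⟨-(a*V^2), by linear_combination hSV⟩
  intro N
  induction N using Nat.strong_induction_on with
  | _ N IH =>
    intro p w hpN hp hw hsol hw2 hpa hpc
    have hSlep : S ≤ p := hmin p w hp hw hsol
    rcases eq_or_lt_of_le hSlep with hpS | hSp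
    · have hwV : w = V := sq_eq_of_sol a c S V p w hac hV hw hSV hsol hpS.symm
      exact ⟨hwV ▸ hw2, hpS ▸ hpa, hpS ▸ hpc⟩
    · obtain ⟨h1pos, h1lt, hw1pos, h1sol⟩ :=
        descent_step a c S V p w ha hc hS hV hSV hp hw hsol hSp
      set p₁ := p*S + a*c*w*V with hp₁
      set w₁ := w*S - p*V with hw₁
      have hSlep1 : S ≤ p₁ := hmin p₁ w₁ h1pos hw1pos h1sol
      rcases eq_or_lt_of_le hSlep1 with hp1S | hSp1
      · exfalso
        have hw1V : w₁ = V := sq_eq_of_sol a c S V p₁ w₁ hac hV hw1pos hSV h1sol hp1S.symm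
        have hpval : p = 2*S^2 - 1 := by
          have hid : p * (S^2 + a*c*V^2) = p₁*S - a*c*w₁*V := by
            simp only [hp₁, hw₁]; ring
          rw [hSV, mul_one, ← hp1S, hw1V] at hid
          linear_combination hid - hSV
        have hdva : 2*a ∣ 2*S^2 - 2 := by
          obtain ⟨k, hk⟩ := haS2
          exact ⟨k, by linarith⟩
        have hdvc : 2*c ∣ 2*S^2 - 2 := by
          obtain ⟨k, hk⟩ := hcS2
          exact ⟨k, by linarith⟩
        rcases hε with rfl | rfl
        · have h2 : 2*c ∣ 2 := by
            have := dvd_sub hpc hdvc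
            rw [hpval] at this
            convert this using 1; rfl; ring
          have h3 : -(2*c) ≤ 2 := Int.le_of_dvd (by norm_num) h2.neg_left
          linarith
        · have h2 : 2*a ∣ 2 := by
            have := dvd_sub hpa hdva
            rw [hpval] at this
            convert this using 1; rfl; ring
          have h3 : 2*a ≤ 2 := Int.le_of_dvd (by norm_num) h2
          omega
      · obtain ⟨h2pos, h2lt, hw2pos, h2sol⟩ :=
          descent_step a c S V p₁ w₁ ha hc hS hV hSV h1pos hw1pos h1sol hSp1
        set p₂ := p₁*S + a*c*w₁*V with hp₂
        set w₂ := w₁*S - p₁*V with hw₂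
        have hp2form : p₂ = p*(2*S^2-1) + 2*a*c*S*V*w := by
          simp only [hp₂, hp₁, hw₁]
          linear_combination -p * hSV
        have hw2form : w₂ = w*(2*S^2-1) - 2*p*S*V := by
          simp only [hp₂, hp₁, hw₁, hw₂]
          linear_combination -w * hSV
        obtain ⟨w', hw'⟩ := hw2
        have hpa2 : 2*a ∣ p₂ - ε := by
          obtain ⟨k, hk⟩ := haS2
          obtain ⟨l, hl⟩ := hpa
          refine ⟨p*k + 2*c*S*V*w' + l, ?_⟩
          rw [hp2form, hw']
          linear_combination 2*p*hk + hl
        have hpc2 : 2*c ∣ p₂ + ε := by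
          obtain ⟨k, hk⟩ := hcS2
          obtain ⟨l, hl⟩ := hpc
          refine ⟨p*k + 2*a*S*V*w' + l, ?_⟩
          rw [hp2form, hw']
          linear_combination 2*p*hk + hl
        have hw2even : 2 ∣ w₂ := ⟨w'*(2*S^2-1) - p*S*V, by rw [hw2form, hw']; ring⟩
        clear_value p₁ w₁ p₂ w₂
        exact IH p₂.toNat (by omega) p₂ w₂ (by omega) h2pos hw2pos h2sol hw2even hpa2 hpc2

private lemma improper_form (a c n p q r s : ℤ) (ha : 0 < a) (hn : n = 1 ∨ n = -1)
    (M Q : Matrix (Fin 2) (Fin 2) ℤ) (hM : M = !![p, q; r, s])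
    (hQ : Q = !![2*n*a, 0; 0, 2*n*c])
    (hdet : M.det = -1) (hMQM : Mᵀ * Q * M = Q) :
    s = -p ∧ a * q = c * r := by
  have hn0 : n ≠ 0 := by rcases hn with rfl | rfl <;> norm_num
  subst hM hQ
  have hdet' : p * s - q * r = -1 := by
    rw [Matrix.det_fin_two_of] at hdet; linarith
  rw [show (!![p, q; r, s])ᵀ = !![p, r; q, s] by
    ext i j; fin_cases i <;> fin_cases j <;> simp] at hMQM
  have e00 := congrFun (congrFun hMQM 0) 0
  have e01 := congrFun (congrFun hMQM 0) 1
  simp [Matrix.mul_apply, Fin.sum_univ_two] at e00 e01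
  have E1 : 2*n*a*p^2 + 2*n*c*r^2 = 2*n*a := by linear_combination e00
  have E2 : 2*n*a*p*q + 2*n*c*r*s = 0 := by linear_combination e01
  constructor
  · have h : (2*n*a) * s = (2*n*a) * (-p) := by
      linear_combination (-s)*E1 + r*E2 + (2*n*a*p)*hdet'
    exact mul_left_cancel₀ (mul_ne_zero (mul_ne_zero two_ne_zero hn0) ha.ne') h
  · have h : (2*n) * (a*q) = (2*n) * (c*r) := by
      linear_combination (-q)*E1 + p*E2 + (-(2*n*c*r))*hdet'
    exact mul_left_cancel₀ (mul_ne_zero two_ne_zero hn0) h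

private lemma dvd_of_entry (x y nn m : ℤ) (hy : y ≠ 0) (hnn : nn = 1 ∨ nn = -1)
    (h : (x:ℚ) * ((nn:ℚ)/(y:ℚ)) = m) : y ∣ x := by
  have hy' : (y:ℚ) ≠ 0 := Int.cast_ne_zero.mpr hy
  have h2 : (x:ℚ) * nn = m * y := by
    field_simp at h
    linear_combination h
  have h3 : x * nn = m * y := by exact_mod_cast h2
  have h4 : y ∣ x * nn := ⟨m, by linarith⟩
  rcases hnn with rfl | rfl
  · simpa using h4
  · simpa using h4

private lemma entry_of_dvd (x y nn k : ℤ) (hy : (y:ℚ) ≠ 0) (hx : x = y * k) :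
    (x:ℚ) * ((nn:ℚ)/(y:ℚ)) = ((k*nn : ℤ):ℚ) := by
  subst hx; push_cast; field_simp

private lemma map_ex (p q r s : ℤ) :
    (!![p,q;r,s]).map (Int.cast : ℤ → ℚ) = !![(p:ℚ),(q:ℚ);(r:ℚ),(s:ℚ)] := by
  ext i j; fin_cases i <;> fin_cases j <;> simp

private lemma prod_form (p q r s ε na nc : ℚ) :
    (!![p,q;r,s] - ε • 1) * !![na, 0; 0, nc] = !![(p-ε)*na, q*nc; r*na, (s-ε)*nc] := by
  ext i j
  fin_cases i <;> fin_cases j <;>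
    simp [Matrix.mul_apply, Fin.sum_univ_two, Matrix.one_apply] <;> ring

/-- for the diagonal form with `n = ±1` and `a ≠ 1`, an automorph
of determinant `-1` inducing `±id` on the discriminant group exists iff `V` is
even and `S ≡ ±1 (mod 2a)`, `S ≡ ∓1 (mod 2c)`; and then `a'·u` induces it. -/
theorem diagonal_improper_automorph_on_discriminant_iff
    (a c n : ℤ) (hac : Int.gcd a c = 1) (ha : 0 < a) (ha1 : a ≠ 1) (hc : c < 0)
    (haltc : a < -c) (hsq : ¬ ∃ m : ℤ, m * m = -(a * c))
    (hn : n = 1 ∨ n = -1)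
    (Q : Matrix (Fin 2) (Fin 2) ℤ) (hQ : Q = n • !![2 * a, 0; 0, 2 * c])
    (S V : ℤ) (hS : 0 < S) (hV : 0 < V) (hSV : S ^ 2 + a * c * V ^ 2 = 1)
    (hmin : ∀ s v : ℤ, 0 < s → 0 < v → s ^ 2 + a * c * v ^ 2 = 1 → S ≤ s)
    (u : Matrix (Fin 2) (Fin 2) ℤ) (hu : u = !![S, -c * V; a * V, S])
    (A : Matrix (Fin 2) (Fin 2) ℤ) (hA : A = !![1, 0; 0, -1]) :
    ((∃ (M : Matrix (Fin 2) (Fin 2) ℤ) (ε : ℤ),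
        M.det = -1 ∧ Mᵀ * Q * M = Q ∧ (ε = 1 ∨ ε = -1) ∧
        ∀ i j : Fin 2, ∃ m : ℤ,
          ((M.map (Int.cast : ℤ → ℚ) - (ε : ℚ) • 1) *
            (Q.map (Int.cast : ℤ → ℚ))⁻¹) i j = (m : ℚ)) ↔
      (2 ∣ V ∧ ∃ ε : ℤ, (ε = 1 ∨ ε = -1) ∧
        S ≡ ε [ZMOD 2 * a] ∧ S ≡ -ε [ZMOD 2 * c])) ∧
    (∀ ε : ℤ, (ε = 1 ∨ ε = -1) → 2 ∣ V →
      S ≡ ε [ZMOD 2 * a] → S ≡ -ε [ZMOD 2 * c] →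
      ∀ i j : Fin 2, ∃ m : ℤ,
        (((A * u).map (Int.cast : ℤ → ℚ) - (ε : ℚ) • 1) *
          (Q.map (Int.cast : ℤ → ℚ))⁻¹) i j = (m : ℚ)) := by
  have hn0 : n ≠ 0 := by rcases hn with rfl | rfl <;> norm_num
  have hacneg : a*c < 0 := mul_neg_of_pos_of_neg ha hc
  have h2a0 : (2*a : ℤ) ≠ 0 := by omega
  have h2c0 : (2*c : ℤ) ≠ 0 := by omega
  have h2a0' : ((2*a : ℤ):ℚ) ≠ 0 := Int.cast_ne_zero.mpr h2a0
  have h2c0' : ((2*c : ℤ):ℚ) ≠ 0 := Int.cast_ne_zero.mpr h2c0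
  have ha' : (a:ℚ) ≠ 0 := Int.cast_ne_zero.mpr ha.ne'
  have hc' : (c:ℚ) ≠ 0 := Int.cast_ne_zero.mpr hc.ne
  have Qe : Q = !![2*n*a, 0; 0, 2*n*c] := by
    rw [hQ]; ext i j; fin_cases i <;> fin_cases j <;> simp [Matrix.smul_apply] <;> ring
  have hQinv : (Q.map (Int.cast : ℤ → ℚ))⁻¹ =
      !![(n:ℚ)/((2*a : ℤ):ℚ), 0; 0, (n:ℚ)/((2*c : ℤ):ℚ)] := by
    have hmap : Q.map (Int.cast : ℤ → ℚ) = !![2*(n:ℚ)*a, 0; 0, 2*(n:ℚ)*c] := by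
      rw [Qe]; ext i j; fin_cases i <;> fin_cases j <;> simp
    rw [hmap]
    apply inv_eq_right_inv
    ext i j
    fin_cases i <;> fin_cases j <;>
      simp [Matrix.mul_apply, Fin.sum_univ_two, Matrix.one_apply] <;>
      rcases hn with rfl | rfl <;> push_cast <;> field_simp
  -- the A*u matrix
  have hAUe : A * u = !![S, -(c*V); -(a*V), -S] := by
    rw [hA, hu]; ext i j; fin_cases i <;> fin_cases j <;>
      simp [Matrix.mul_apply, Fin.sum_univ_two] <;> ring
  have hdetAU : (A*u).det = -1 := by
    rw [hAUe, Matrix.det_fin_two_of]; linear_combination -hSV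
  have hautAU : (A*u)ᵀ * Q * (A*u) = Q := by
    rw [hAUe, Qe]
    rw [show (!![S, -(c*V); -(a*V), -S])ᵀ = !![S, -(a*V); -(c*V), -S] by
      ext i j; fin_cases i <;> fin_cases j <;> simp]
    have hcalc : !![S, -(a*V); -(c*V), -S] * !![2*n*a, 0; 0, 2*n*c] * !![S, -(c*V); -(a*V), -S]
        = !![2*n*a*(S^2+a*c*V^2), 0; 0, 2*n*c*(S^2+a*c*V^2)] := by
      ext i j
      fin_cases i <;> fin_cases j <;>
        simp [Matrix.mul_apply, Fin.sum_univ_two] <;> ring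
    rw [hcalc, hSV, mul_one, mul_one]
  -- part 2: the integrality statement for A*u
  have main2 : ∀ ε : ℤ, (ε = 1 ∨ ε = -1) → 2 ∣ V → 2*a ∣ S - ε → 2*c ∣ S + ε →
      ∀ i j : Fin 2, ∃ m : ℤ,
        (((A * u).map (Int.cast : ℤ → ℚ) - (ε : ℚ) • 1) *
          (Q.map (Int.cast : ℤ → ℚ))⁻¹) i j = (m : ℚ) := by
    intro ε hε hV2 h1 h2 i j
    obtain ⟨k1, hk1⟩ := h1
    obtain ⟨k2, hk2⟩ := h2
    obtain ⟨k3, hk3⟩ := hV2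
    rw [hAUe, hQinv, map_ex, prod_form]
    fin_cases i <;> fin_cases j <;>
      simp only [Matrix.cons_val', Matrix.cons_val_zero, Matrix.empty_val',
        Matrix.cons_val_fin_one, Matrix.cons_val_one, Matrix.head_cons, Matrix.head_fin_const,
        Matrix.of_apply, Fin.mk_zero, Fin.mk_one]
    · refine ⟨k1*n, ?_⟩
      have := entry_of_dvd (S-ε) (2*a) n k1 h2a0' hk1
      push_cast at this ⊢
      linear_combination this
    · refine ⟨(-k3)*n, ?_⟩
      have := entry_of_dvd (-(c*V)) (2*c) n (-k3) h2c0' (by rw [hk3]; ring)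
      push_cast at this ⊢
      linear_combination this
    · refine ⟨(-k3)*n, ?_⟩
      have := entry_of_dvd (-(a*V)) (2*a) n (-k3) h2a0' (by rw [hk3]; ring)
      push_cast at this ⊢
      linear_combination this
    · refine ⟨(-k2)*n, ?_⟩
      have := entry_of_dvd (-S-ε) (2*c) n (-k2) h2c0' (by rw [show -S-ε = -(S+ε) by ring, hk2]; ring)
      push_cast at this ⊢
      linear_combination this
  constructor
  · constructor
    · -- forward
      rintro ⟨M, ε, hdet, hMQM, hε, hint⟩
      obtain ⟨p, q, r, s, hM⟩ : ∃ p q r s, M = !![p,q;r,s] :=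
        ⟨M 0 0, M 0 1, M 1 0, M 1 1, Matrix.eta_fin_two M⟩
      obtain ⟨hs, hqr⟩ := improper_form a c n p q r s ha hn M Q hM Qe hdet hMQM
      have hco : IsCoprime a c := Int.isCoprime_iff_gcd_eq_one.mpr hac
      obtain ⟨w, hw⟩ : a ∣ r := hco.dvd_of_dvd_mul_left
        ⟨q, by linear_combination -hqr⟩
      have hq : q = c*w := by
        apply mul_left_cancel₀ ha.ne'
        rw [hqr, hw]; ring
      have hPell : p^2 + a*c*w^2 = 1 := by
        have hd : p*s - q*r = -1 := by
          rw [hM, Matrix.det_fin_two_of] at hdet; linarith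
        rw [hs, hq, hw] at hd
        linear_combination -hd
      -- extract divisibility facts from the integrality hypothesis
      have Pmat : (M.map (Int.cast : ℤ → ℚ) - (ε : ℚ) • 1) * (Q.map (Int.cast : ℤ → ℚ))⁻¹ =
          !![((p:ℚ)-ε)*((n:ℚ)/((2*a : ℤ):ℚ)), (q:ℚ)*((n:ℚ)/((2*c : ℤ):ℚ));
             (r:ℚ)*((n:ℚ)/((2*a : ℤ):ℚ)), ((s:ℚ)-ε)*((n:ℚ)/((2*c : ℤ):ℚ))] := by
        rw [hM, hQinv, map_ex, prod_form]
      have hdva : 2*a ∣ p - ε := by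
        obtain ⟨m, hm⟩ := hint 0 0
        rw [Pmat] at hm
        simp only [Matrix.cons_val', Matrix.cons_val_zero, Matrix.empty_val',
          Matrix.cons_val_fin_one, Matrix.cons_val_one, Matrix.head_cons,
          Matrix.head_fin_const,
          Matrix.of_apply, Fin.mk_zero, Fin.mk_one] at hm
        refine dvd_of_entry (p - ε) (2*a) n m h2a0 hn ?_
        push_cast at hm ⊢
        linear_combination hm
      have hdvw : 2 ∣ w := by
        have haw : 2*a ∣ a*w := by
          obtain ⟨m, hm⟩ := hint 1 0
          rw [Pmat] at hm
          simp only [Matrix.cons_val', Matrix.cons_val_zero, Matrix.empty_val',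
            Matrix.cons_val_fin_one, Matrix.cons_val_one, Matrix.head_cons,
            Matrix.head_fin_const,
            Matrix.of_apply, Fin.mk_zero, Fin.mk_one] at hm
          refine dvd_of_entry (a*w) (2*a) n m h2a0 hn ?_
          rw [← hw]
          push_cast at hm ⊢
          linear_combination hm
        obtain ⟨k, hk⟩ := haw
        exact ⟨k, mul_left_cancel₀ ha.ne' (by rw [hk]; ring)⟩
      have hdvc : 2*c ∣ p + ε := by
        obtain ⟨m, hm⟩ := hint 1 1
        rw [Pmat] at hm
        simp only [Matrix.cons_val', Matrix.cons_val_zero, Matrix.empty_val',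
          Matrix.cons_val_fin_one, Matrix.cons_val_one, Matrix.head_cons,
          Matrix.head_fin_const,
          Matrix.of_apply, Fin.mk_zero, Fin.mk_one] at hm
        have h := dvd_of_entry (s - ε) (2*c) n m h2c0 hn (by push_cast at hm ⊢; linear_combination hm)
        rw [hs] at h
        have : 2*c ∣ -(p + ε) := by
          rw [show -(p+ε) = -p - ε by ring]; exact h
        exact dvd_neg.mp this
      -- rule out w = 0
      have hc2no : ¬ (2*c ∣ 2) := by
        intro h
        have := Int.le_of_dvd (by norm_num) h.neg_left
        linarith
      have ha2no : ¬ (2*a ∣ 2) := by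
        intro h
        have := Int.le_of_dvd (by norm_num) h
        omega
      have hwne : w ≠ 0 := by
        rintro rfl
        have hp2 : p * p = 1 := by nlinarith
        rcases Int.eq_one_or_neg_one_of_mul_eq_one' hp2 with ⟨rfl, -⟩ | ⟨rfl, -⟩ <;>
          rcases hε with rfl | rfl
        · obtain ⟨k, hk⟩ := hdvc
          exact hc2no ⟨k, by linear_combination hk⟩
        · obtain ⟨k, hk⟩ := hdva
          exact ha2no ⟨k, by linear_combination hk⟩
        · obtain ⟨k, hk⟩ := hdva
          exact ha2no ⟨-k, by linear_combination -hk⟩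
        · obtain ⟨k, hk⟩ := hdvc
          exact hc2no ⟨-k, by linear_combination -hk⟩
      have hpne : p ≠ 0 := by
        rintro rfl
        nlinarith [mul_nonpos_of_nonpos_of_nonneg hacneg.le (sq_nonneg w)]
      -- reduce to positive p, w and apply key induction
      have final : 2 ∣ V ∧ ∃ E : ℤ, (E = 1 ∨ E = -1) ∧ 2*a ∣ S - E ∧ 2*c ∣ S + E := by
        have hE : (if 0 < p then ε else -ε) = 1 ∨ (if 0 < p then ε else -ε) = -1 := by
          rcases hε with rfl | rfl <;> by_cases h : 0 < p <;> simp [h]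
        set P := if 0 < p then p else -p with hP
        set E := if 0 < p then ε else -ε with hEdef
        set W := if 0 < w then w else -w with hW
        have hPpos : 0 < P := by
          rw [hP]; split <;> omega
        have hWpos : 0 < W := by
          rw [hW]; split <;> omega
        have hsolPW : P^2 + a*c*W^2 = 1 := by
          rw [hP, hW]; split <;> split <;> linear_combination hPell
        have hWeven : 2 ∣ W := by
          rw [hW]; split
          · exact hdvw
          · exact hdvw.neg_right
        have hPa : 2*a ∣ P - E := by
          rw [hP, hEdef]; split
          · exact hdva
          · exact (by rw [show -p - -ε = -(p - ε) by ring]; exact hdva.neg_right)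
        have hPc : 2*c ∣ P + E := by
          rw [hP, hEdef]; split
          · exact hdvc
          · exact (by rw [show -p + -ε = -(p + ε) by ring]; exact hdvc.neg_right)
        obtain ⟨hV2, hSa, hSc⟩ := key_induction a c S V ha ha1 hc haltc hS hV hSV hmin
          E hE P.toNat P W (by omega) hPpos hWpos hsolPW hWeven hPa hPc
        exact ⟨hV2, E, hE, hSa, hSc⟩
      obtain ⟨hV2, E, hE, hSa, hSc⟩ := final
      refine ⟨hV2, E, hE, ?_, ?_⟩
      · exact (Int.modEq_iff_dvd.mpr hSa).symm
      · exact (Int.modEq_iff_dvd.mpr (by rw [show S - -E = S + E by ring]; exact hSc)).symm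
    · -- backward
      rintro ⟨hV2, ε, hε, hm1, hm2⟩
      have h1 : 2*a ∣ S - ε := by
        have h := Int.ModEq.dvd hm1
        rw [show S - ε = -(ε - S) by ring]
        exact dvd_neg.mpr h
      have h2 : 2*c ∣ S + ε := by
        have h := Int.ModEq.dvd hm2
        rw [show S + ε = -(-ε - S) by ring]
        exact dvd_neg.mpr h
      exact ⟨A*u, ε, hdetAU, hautAU, hε, main2 ε hε hV2 h1 h2⟩
  · intro ε hε hV2 hm1 hm2
    have h1 : 2*a ∣ S - ε := by
      have h := Int.ModEq.dvd hm1
      rw [show S - ε = -(ε - S) by ring]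
      exact dvd_neg.mpr h
    have h2 : 2*c ∣ S + ε := by
      have h := Int.ModEq.dvd hm2
      rw [show S + ε = -(-ε - S) by ring]
      exact dvd_neg.mpr h
    exact main2 ε hε hV2 h1 h2
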